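/- The field ℚ(cos(2π/9)) is a Galois extension of ℚ of degree 3 whose Galois group is cyclic (of order 3). -/

import Mathlib

open Polynomial Real IntermediateField

private noncomputable def Pcub : ℚ[X] := X ^ 3 - C (3/4) * X + C (1/8)

private lemma Pcub_monic : Pcub.Monic := by unfold Pcub; monicity!

private lemma Pcub_natDegree : Pcub.natDegree = 3 := by unfold Pcub; compute_degree!

private lemma aeval_Pcub (x : ℝ) (h : 4 * x ^ 3 - 3 * x = -(1/2)) :
    (aeval x) Pcub = 0 := by
  simp only [Pcub, map_add, map_sub, map_mul, map_pow, aeval_X, aeval_C]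
  have h34 : ((3/4 : ℚ) : ℝ) = 3/4 := by norm_num
  have h18 : ((1/8 : ℚ) : ℝ) = 1/8 := by norm_num
  rw [show (algebraMap ℚ ℝ) (3/4) = (3/4 : ℝ) by norm_num,
    show (algebraMap ℚ ℝ) (1/8) = (1/8 : ℝ) by norm_num]
  linarith

private lemma cos_root (θ : ℝ) (h : Real.cos (3 * θ) = -(1/2)) :
    (aeval (Real.cos θ)) Pcub = 0 := by
  rw [Real.cos_three_mul] at h
  exact aeval_Pcub _ h

private lemma root1 : (aeval (Real.cos (2 * π / 9))) Pcub = 0 := by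
  apply cos_root
  rw [show (3:ℝ) * (2 * π / 9) = π - π/3 by ring, Real.cos_pi_sub, Real.cos_pi_div_three]

private lemma root2 : (aeval (Real.cos (4 * π / 9))) Pcub = 0 := by
  apply cos_root
  rw [show (3:ℝ) * (4 * π / 9) = π/3 + π by ring, Real.cos_add_pi, Real.cos_pi_div_three]

private lemma root3 : (aeval (Real.cos (8 * π / 9))) Pcub = 0 := by
  apply cos_root
  rw [show (3:ℝ) * (8 * π / 9) = (π - π/3) + 2*π by ring, Real.cos_add_two_pi,
    Real.cos_pi_sub, Real.cos_pi_div_three]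

private lemma Pcub_irreducible : Irreducible Pcub := by
  rw [Polynomial.irreducible_iff_roots_eq_zero_of_degree_le_three
    (by rw [Pcub_natDegree]; norm_num) (by rw [Pcub_natDegree])]
  rw [Multiset.eq_zero_iff_forall_notMem]
  intro q hq
  rw [mem_roots (Pcub_monic.ne_zero), IsRoot, Pcub] at hq
  simp only [eval_add, eval_sub, eval_mul, eval_pow, eval_X, eval_C] at hq
  -- q^3 - 3/4 q + 1/8 = 0; set r = 2q, then r^3 - 3r + 1 = 0
  set r : ℚ := 2 * q with hr
  have hre : r ^ 3 - 3 * r + 1 = 0 := by rw [hr]; ring_nf; ring_nf at hq; linarith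
  have hint : IsIntegral ℤ r := by
    refine ⟨X ^ 3 - C 3 * X + C 1, ?_, ?_⟩
    · monicity!
    · simp only [eval₂_add, eval₂_sub, eval₂_mul, eval₂_pow, eval₂_X, eval₂_C]
      rw [show (algebraMap ℤ ℚ) 3 = (3 : ℚ) by norm_num,
        show (algebraMap ℤ ℚ) 1 = (1 : ℚ) by norm_num]
      linarith [hre]
  obtain ⟨n, hn⟩ := IsIntegrallyClosed.isIntegral_iff.mp hint
  have hne : (n : ℚ) ^ 3 - 3 * n + 1 = 0 := by
    rw [show ((n : ℤ) : ℚ) = r from hn]; exact hre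
  have hni : n ^ 3 - 3 * n + 1 = 0 := by exact_mod_cast hne
  have hdvd : n ∣ 1 := ⟨3 - n ^ 2, by linarith [hni]⟩
  have h1 : n = 1 ∨ n = -1 := Int.isUnit_iff.mp (isUnit_of_dvd_one hdvd)
  rcases h1 with rfl | rfl <;> omega

set_option maxHeartbeats 1000000 in
set_option synthInstance.maxHeartbeats 1000000 in
/-- `ℚ(cos (2π / 9))` is a Galois extension of `ℚ` of degree `3` with cyclic
Galois group. -/
theorem adjoin_cos_two_pi_div_nine_cyclic_degree_three :
    letI E : IntermediateField ℚ ℝ :=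
      IntermediateField.adjoin ℚ {Real.cos (2 * Real.pi / 9)}
    IsGalois ℚ E ∧ Module.finrank ℚ E = 3 ∧ IsCyclic (E ≃ₐ[ℚ] E) := by
  set c₁ := Real.cos (2 * π / 9) with hc₁
  set c₂ := Real.cos (4 * π / 9) with hcc₂
  set c₃ := Real.cos (8 * π / 9) with hcc₃
  set E := IntermediateField.adjoin ℚ {c₁} with hE
  have hm1 : c₁ ∈ E := mem_adjoin_simple_self ℚ c₁
  have hc2eq : c₂ = c₁ * c₁ + c₁ * c₁ - 1 := by
    rw [hcc₂, hc₁, show (4:ℝ) * π / 9 = 2 * (2 * π / 9) by ring, Real.cos_two_mul]; ring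
  have hm2 : c₂ ∈ E := by
    rw [hc2eq]
    exact E.sub_mem (E.add_mem (E.mul_mem hm1 hm1) (E.mul_mem hm1 hm1)) E.one_mem
  have hc3eq : c₃ = c₂ * c₂ + c₂ * c₂ - 1 := by
    rw [hcc₂, hcc₃, show (8:ℝ) * π / 9 = 2 * (4 * π / 9) by ring, Real.cos_two_mul]; ring
  have hm3 : c₃ ∈ E := by
    rw [hc3eq]
    exact E.sub_mem (E.add_mem (E.mul_mem hm2 hm2) (E.mul_mem hm2 hm2)) E.one_mem
  -- the three roots as elements of E
  set x₁ : E := ⟨c₁, hm1⟩ with hx₁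
  set x₂ : E := ⟨c₂, hm2⟩ with hx₂
  set x₃ : E := ⟨c₃, hm3⟩ with hx₃
  have key : ∀ (x : E), (aeval (x : ℝ)) Pcub = 0 → (aeval x) Pcub = 0 := by
    intro x hx
    have h : (aeval (E.val x)) Pcub = E.val ((aeval x) Pcub) :=
      Polynomial.aeval_algHom_apply E.val x Pcub
    apply Subtype.coe_injective
    show E.val ((aeval x) Pcub) = E.val 0
    rw [← h, map_zero]
    exact hx
  have hr1 : (aeval x₁) Pcub = 0 := key _ root1
  have hr2 : (aeval x₂) Pcub = 0 := key _ root2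
  have hr3 : (aeval x₃) Pcub = 0 := key _ root3
  -- distinctness
  have hpi := Real.pi_pos
  have hlt12 : c₂ < c₁ :=
    Real.cos_lt_cos_of_nonneg_of_le_pi (by positivity) (by linarith) (by linarith)
  have hlt23 : c₃ < c₂ :=
    Real.cos_lt_cos_of_nonneg_of_le_pi (by positivity) (by linarith) (by linarith)
  have hne12 : x₁ ≠ x₂ := fun h => absurd (congrArg Subtype.val h) (by simp [x₁, x₂]; linarith)
  have hne13 : x₁ ≠ x₃ := fun h => absurd (congrArg Subtype.val h) (by simp [x₁, x₃]; linarith)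
  have hne23 : x₂ ≠ x₃ := fun h => absurd (congrArg Subtype.val h) (by simp [x₂, x₃]; linarith)
  -- Pcub splits in E
  have hq0 : Pcub.map (algebraMap ℚ E) ≠ 0 :=
    Polynomial.map_ne_zero Pcub_monic.ne_zero
  have hmem : ∀ (x : E), (aeval x) Pcub = 0 → x ∈ (Pcub.map (algebraMap ℚ E)).roots := by
    intro x hx
    rw [Polynomial.mem_roots hq0, Polynomial.IsRoot, Polynomial.eval_map, ← Polynomial.aeval_def]
    exact hx
  have hsub : ({x₁, x₂, x₃} : Finset E) ⊆ (Pcub.map (algebraMap ℚ E)).roots.toFinset := by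
    intro a ha
    simp only [Finset.mem_insert, Finset.mem_singleton] at ha
    rcases ha with rfl | rfl | rfl <;>
      exact Multiset.mem_toFinset.mpr (hmem _ (by assumption))
  have hcard3 : ({x₁, x₂, x₃} : Finset E).card = 3 := by
    rw [Finset.card_insert_of_notMem (by simp [hne12, hne13]),
      Finset.card_insert_of_notMem (by simp [hne23]), Finset.card_singleton]
  have hdeg : (Pcub.map (algebraMap ℚ E)).natDegree = 3 := by
    rw [Polynomial.natDegree_map, Pcub_natDegree]
  have hge : 3 ≤ Multiset.card (Pcub.map (algebraMap ℚ E)).roots := by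
    calc 3 = ({x₁, x₂, x₃} : Finset E).card := hcard3.symm
    _ ≤ (Pcub.map (algebraMap ℚ E)).roots.toFinset.card := Finset.card_le_card hsub
    _ ≤ Multiset.card (Pcub.map (algebraMap ℚ E)).roots := Multiset.toFinset_card_le _
  have hle : Multiset.card (Pcub.map (algebraMap ℚ E)).roots ≤ 3 := by
    rw [← hdeg]; exact Polynomial.card_roots' _
  have hsplits : Polynomial.Splits (Pcub.map (algebraMap ℚ E)) := by
    apply (Polynomial.splits_iff_card_roots).mpr
    omega
  -- integrality
  have hint : IsIntegral ℚ c₁ := ⟨Pcub, Pcub_monic, by rw [← Polynomial.aeval_def]; exact root1⟩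
  -- adjoin rootSet = ⊤
  have htop : Algebra.adjoin ℚ (Pcub.rootSet E) = ⊤ := by
    have hx1top : Algebra.adjoin ℚ ({x₁} : Set E) = ⊤ := by
      have key2 : @Algebra.adjoin ℚ E _ _ E.algebra' ({x₁} : Set E) = ⊤ := by
        haveI : NoZeroSMulDivisors ℚ (↥E) := inferInstance
        apply Subalgebra.map_injective (f := E.val) Subtype.coe_injective
        rw [AlgHom.map_adjoin, Set.image_singleton, Algebra.map_top, E.range_val,
          show E.val x₁ = c₁ from rfl]
        exact (IntermediateField.adjoin_simple_toSubalgebra_of_isAlgebraic hint.isAlgebraic).symm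
      convert key2 <;> exact Subsingleton.elim _ _
    rw [eq_top_iff, ← hx1top]
    apply Algebra.adjoin_mono
    rw [Set.singleton_subset_iff, Polynomial.mem_rootSet]
    exact ⟨Pcub_monic.ne_zero, hr1⟩
  haveI hsf : Pcub.IsSplittingField ℚ E := ⟨hsplits, htop⟩
  haveI hfd : FiniteDimensional ℚ E := Polynomial.IsSplittingField.finiteDimensional E Pcub
  have hgal : IsGalois ℚ E := IsGalois.of_separable_splitting_field Pcub_irreducible.separable
  have hmp : minpoly ℚ c₁ = Pcub := Eq.symm <|
    minpoly.eq_of_irreducible_of_monic Pcub_irreducible root1 Pcub_monic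
  have hrank : Module.finrank ℚ E = 3 := by
    rw [hE, IntermediateField.adjoin.finrank hint, hmp, Pcub_natDegree]
  haveI : IsGalois ℚ E := hgal
  haveI : Fact (Nat.Prime 3) := ⟨by norm_num⟩
  have hcardaut : Nat.card (E ≃ₐ[ℚ] E) = 3 := by
    rw [IsGalois.card_aut_eq_finrank, hrank]
  exact ⟨hgal, hrank, isCyclic_of_prime_card hcardaut⟩
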